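/- Let x be an infinite word with rep(x) := lim inf_{n→∞} r(n,x)/n. Then the irrationality exponent of ξ = Σ_{j≥1} x_j/b^j (for integer b ≥ 2, x over {0,...,b−1}, x not ultimately periodic) satisfies μ(ξ) ≥ 1 + 1/rep(x). -/

import Mathlib

open Filter

variable {A : Type*}

/-- The factor of the infinite word `x` of length `n` starting at position `j` (0-indexed). -/
def subwordAt (x : ℕ → A) (j n : ℕ) : List A := (List.range n).map fun i => x (j + i)

/-- `w` is a factor (subword) of the infinite word `x`. -/
def IsFactor (w : List A) (x : ℕ → A) : Prop := ∃ j, subwordAt x j w.length = w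

/-- The subword complexity `p(n, x)`: the number of distinct length-`n` factors of `x`. -/
noncomputable def complexity (x : ℕ → A) (n : ℕ) : ℕ :=
  Set.ncard {w : List A | w.length = n ∧ IsFactor w x}

/-- `x` is ultimately periodic. -/
def UltimatelyPeriodic (x : ℕ → A) : Prop := ∃ N T, 0 < T ∧ ∀ i ≥ N, x (i + T) = x i

/-- `w` is a left-special factor of `x`. -/
def LeftSpecial (w : List A) (x : ℕ → A) : Prop :=
  ∃ a b : A, a ≠ b ∧ IsFactor (a :: w) x ∧ IsFactor (b :: w) x

/-- `w` is a right-special factor of `x`. -/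
def RightSpecial (w : List A) (x : ℕ → A) : Prop :=
  ∃ a b : A, a ≠ b ∧ IsFactor (w ++ [a]) x ∧ IsFactor (w ++ [b]) x

/-- `w` occurs infinitely many times in `x`. -/
def OccursInfinitely (w : List A) (x : ℕ → A) : Prop :=
  {j : ℕ | subwordAt x j w.length = w}.Infinite

/-- `x` is `n`-recurrent: every length-`n` factor occurs infinitely often. -/
def NRecurrent (n : ℕ) (x : ℕ → A) : Prop :=
  ∀ j : ℕ, {i : ℕ | subwordAt x i n = subwordAt x j n}.Infinite

/-- The shift of `x` by `s` places. -/
def shiftWord (x : ℕ → A) (s : ℕ) : ℕ → A := fun i => x (s + i)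

/-- `s_m`: the length of the `m`-th non-recurrent prefix of `x`. -/
noncomputable def srec (x : ℕ → A) (m : ℕ) : ℕ := sInf {s : ℕ | NRecurrent m (shiftWord x s)}

/-- `z_m`: the maximal `m`-recurrent tail of `x`, so that `x = a_m z_m`. -/
noncomputable def ztail (x : ℕ → A) (m : ℕ) : ℕ → A := shiftWord x (srec x m)

/-- The repetition function `r(n, x)`: the least `m ≥ 1` such that
`x_{m+1} … x_{m+n} = x_{i+1} … x_{i+n}` for some `0 ≤ i < m`. -/
noncomputable def repFn (x : ℕ → A) (n : ℕ) : ℕ :=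
  sInf {m : ℕ | 0 < m ∧ ∃ i < m, subwordAt x m n = subwordAt x i n}

/-- A right-special factor `w` is essential if it is a suffix of right-special
factors of every length `m ≥ |w|`. -/
def EssentialRightSpecial (w : List A) (x : ℕ → A) : Prop :=
  RightSpecial w x ∧
    ∀ m, w.length ≤ m → ∃ W : List A, W.length = m ∧ RightSpecial W x ∧ W.drop (m - w.length) = w

/-- `C` is (the word read along) a cycle at `w` in the Rauzy graph `𝒢_n(y)`:
it has length `> n`, prefix `w`, suffix `w`, and is a factor of `y`. -/
def IsCycleAt (y : ℕ → A) (n : ℕ) (w C : List A) : Prop :=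
  n < C.length ∧ C.take n = w ∧ C.drop (C.length - n) = w ∧ IsFactor C y

/-- The Rauzy graph `𝒢_n(y)` is of `∞`-shape with bi-special vertex `w`
and the two (simple) cycles `U` and `V`. -/
def InftyShape (y : ℕ → A) (n : ℕ) (w U V : List A) : Prop :=
  w.length = n ∧ LeftSpecial w y ∧ RightSpecial w y ∧
  (∀ v : List A, v.length = n → IsFactor v y → (LeftSpecial v y ∨ RightSpecial v y) → v = w) ∧
  IsCycleAt y n w U ∧ IsCycleAt y n w V ∧ U ≠ V ∧
  (∀ j, 0 < j → j < U.length - n → (U.drop j).take n ≠ w) ∧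
  (∀ j, 0 < j → j < V.length - n → (V.drop j).take n ≠ w) ∧
  (∀ v : List A, v.length = n → IsFactor v y →
    (∃ j ≤ U.length - n, (U.drop j).take n = v) ∨ (∃ j ≤ V.length - n, (V.drop j).take n = v))

/-- The word read along the concatenated path `U V^b U`, where `U`, `V` are
cycles at a vertex of length `n` (gluing overlaps of length `n`). -/
def cyclePow (n : ℕ) (U V : List A) (b : ℕ) : List A :=
  U ++ (List.replicate b (V.drop n)).flatten ++ U.drop n

/-- The irrationality exponent of a real number, valued in `ℝ≥0∞`. -/
noncomputable def irrationalityExponent (ξ : ℝ) : ENNReal :=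
  ⨆ (μ : ℝ) (_ : {q : ℕ | 0 < q ∧ ∃ p : ℤ, |ξ - p / q| < 1 / (q : ℝ) ^ μ}.Infinite),
    ENNReal.ofReal μ

section ProofAux

lemma subwordAt_eq_iff {A : Type*} (x : ℕ → A) (a c n : ℕ) :
    subwordAt x a n = subwordAt x c n ↔ ∀ t < n, x (a + t) = x (c + t) := by
  unfold subwordAt
  rw [List.map_inj_left]
  simp [List.mem_range]

lemma repFn_spec (b : ℕ) (x : ℕ → ℕ) (hd : ∀ j, x j < b) (n : ℕ) :
    0 < repFn x n ∧ ∃ i < repFn x n, ∀ t < n, x (repFn x n + t) = x (i + t) := by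
  have hne : {m : ℕ | 0 < m ∧ ∃ i < m, subwordAt x m n = subwordAt x i n}.Nonempty := by
    obtain ⟨a, c, hac, hfeq⟩ := Finite.exists_ne_map_eq_of_infinite
      (fun (j : ℕ) => (fun t : Fin n => (⟨x (j + t), hd _⟩ : Fin b)))
    have key : ∀ a c : ℕ, (fun t : Fin n => (⟨x (a + t), hd _⟩ : Fin b)) =
        (fun t : Fin n => (⟨x (c + t), hd _⟩ : Fin b)) → subwordAt x a n = subwordAt x c n := by
      intro a c h
      rw [subwordAt_eq_iff]
      intro t ht
      have := congrFun h ⟨t, ht⟩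
      simpa using congrArg Fin.val this
    rcases lt_trichotomy a c with h | h | h
    · exact ⟨c, by omega, a, h, key c a hfeq.symm⟩
    · exact absurd h hac
    · exact ⟨a, by omega, c, h, key a c hfeq⟩
  obtain ⟨hpos, i, hi, hsub⟩ := Nat.sInf_mem hne
  exact ⟨hpos, i, hi, (subwordAt_eq_iff x _ i n).mp hsub⟩

lemma finite_repFn_le (b : ℕ) (x : ℕ → ℕ) (hd : ∀ j, x j < b)
    (hx : ¬ UltimatelyPeriodic x) (C : ℕ) : {n : ℕ | repFn x n ≤ C}.Finite := by
  have hA : ∀ m i : ℕ, i < m → {n : ℕ | ∀ t < n, x (m + t) = x (i + t)}.Finite := by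
    intro m i him
    by_contra hinf
    have hinf : {n : ℕ | ∀ t < n, x (m + t) = x (i + t)}.Infinite := hinf
    apply hx
    refine ⟨i, m - i, by omega, fun j hj => ?_⟩
    obtain ⟨nn, hnn, hlt⟩ := hinf.exists_gt (j - i)
    have := hnn (j - i) hlt
    have h1 : m + (j - i) = j + (m - i) := by omega
    have h2 : i + (j - i) = j := by omega
    rw [h1, h2] at this
    exact this
  have hsub : {n : ℕ | repFn x n ≤ C} ⊆
      ⋃ p ∈ (Finset.range (C+1) ×ˢ Finset.range (C+1) : Finset (ℕ × ℕ)),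
        (if p.2 < p.1 then {n : ℕ | ∀ t < n, x (p.1 + t) = x (p.2 + t)} else ∅) := by
    intro n hn
    have hC : repFn x n ≤ C := hn
    obtain ⟨hpos, i, hi, hsubw⟩ := repFn_spec b x hd n
    simp only [Set.mem_iUnion]
    refine ⟨(repFn x n, i), ?_, ?_⟩
    · simp only [Finset.mem_product, Finset.mem_range]
      exact ⟨by omega, by omega⟩
    · simp only [if_pos hi]
      exact hsubw
  exact Set.Finite.subset (Set.Finite.biUnion (Finset.finite_toSet _)
    (fun p _ => by split_ifs with h; exacts [hA p.1 p.2 h, Set.finite_empty])) hsub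

lemma le_pow_sub (b m i : ℕ) (hb : 2 ≤ b) (him : i < m) : m ≤ b ^ m - b ^ i := by
  have aux : ∀ k : ℕ, k + 1 ≤ 2 ^ k := by
    intro k; induction k with
    | zero => norm_num
    | succ k ih => rw [pow_succ]; omega
  have h1 : b ^ i ≤ b ^ (m - 1) := Nat.pow_le_pow_right (by omega) (by omega)
  have h2 : 2 ^ (m - 1) ≤ b ^ (m - 1) := Nat.pow_le_pow_left hb _
  have h3 : b ^ m = b ^ (m - 1) * b := by
    rw [← pow_succ]; congr 1; omega
  have h4 : m ≤ 2 ^ (m - 1) := by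
    have := aux (m - 1); omega
  have h5 : b ^ (m-1) * 2 ≤ b ^ (m-1) * b := Nat.mul_le_mul_left _ hb
  omega

lemma digit_summable (b : ℕ) (hb : 2 ≤ b) (y : ℕ → ℕ) (hy : ∀ j, y j < b) :
    Summable (fun j : ℕ => (y j : ℝ) / (b:ℝ) ^ (j+1)) := by
  have hb1 : (1:ℝ) < b := by exact_mod_cast (by omega : 1 < b)
  have hb0 : (0:ℝ) < b := by linarith
  refine Summable.of_nonneg_of_le (f := fun j : ℕ => ((b:ℝ)⁻¹) ^ j) (fun j => by positivity) ?_ ?_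
  · intro j
    have h1 : (y j : ℝ) ≤ b := by exact_mod_cast (hy j).le
    have h2 : ((b:ℝ)⁻¹)^j = (b:ℝ)/(b:ℝ)^(j+1) := by
      rw [inv_pow, pow_succ', ← div_div, div_self hb0.ne', one_div]
    rw [h2]
    gcongr
  · exact summable_geometric_of_lt_one (by positivity) (by
      rw [inv_lt_one_iff₀]; right; exact hb1)

lemma digit_tsum_le_one (b : ℕ) (hb : 2 ≤ b) (y : ℕ → ℕ) (hy : ∀ j, y j < b) :
    (∑' j : ℕ, (y j : ℝ) / (b:ℝ) ^ (j+1)) ≤ 1 := by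
  have hb1 : (1:ℝ) < b := by exact_mod_cast (by omega : 1 < b)
  have hb0 : (0:ℝ) < b := by linarith
  have hgs : Summable (fun j : ℕ => (((b:ℝ)-1)/b) * ((b:ℝ)⁻¹) ^ j) :=
    (summable_geometric_of_lt_one (by positivity) (by
      rw [inv_lt_one_iff₀]; right; exact hb1)).mul_left _
  have hcmp : ∀ j : ℕ, (y j : ℝ) / (b:ℝ) ^ (j+1) ≤ (((b:ℝ)-1)/b) * ((b:ℝ)⁻¹) ^ j := by
    intro j
    have h1 : (y j : ℝ) ≤ (b:ℝ) - 1 := by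
      have : (y j : ℝ) + 1 ≤ b := by exact_mod_cast (hy j)
      linarith
    have h2 : (((b:ℝ)-1)/b) * ((b:ℝ)⁻¹) ^ j = ((b:ℝ)-1)/(b:ℝ)^(j+1) := by
      rw [inv_pow, ← div_eq_mul_inv, div_div, ← pow_succ']
    rw [h2]
    gcongr
  calc (∑' j : ℕ, (y j : ℝ) / (b:ℝ) ^ (j+1))
      ≤ ∑' j : ℕ, (((b:ℝ)-1)/b) * ((b:ℝ)⁻¹) ^ j :=
        Summable.tsum_le_tsum hcmp (digit_summable b hb y hy) hgs
    _ = (((b:ℝ)-1)/b) * (1 - (b:ℝ)⁻¹)⁻¹ := by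
        rw [tsum_mul_left, tsum_geometric_of_lt_one (by positivity) (by
          rw [inv_lt_one_iff₀]; right; exact hb1)]
    _ = 1 := by
        have : 1 - (b:ℝ)⁻¹ = ((b:ℝ)-1)/b := by field_simp
        rw [this]
        have hpos : (0:ℝ) < ((b:ℝ)-1)/b := by apply div_pos <;> linarith
        exact mul_inv_cancel₀ hpos.ne'

lemma key_approx (b : ℕ) (hb : 2 ≤ b) (x : ℕ → ℕ) (hd : ∀ j, x j < b)
    (n m i : ℕ) (him : i < m)
    (hsub : ∀ t < n, x (m + t) = x (i + t)) (μ : ℝ) (hμ : 1 < μ)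
    (hmn : (μ - 1) * (m:ℝ) < n) :
    0 < b ^ m - b ^ i ∧ ∃ p : ℤ,
      |(∑' j : ℕ, (x j : ℝ) / (b:ℝ) ^ (j+1)) - p / ((b ^ m - b ^ i : ℕ) : ℝ)|
        < 1 / (((b ^ m - b ^ i : ℕ) : ℝ)) ^ μ := by
  have hb1 : (1:ℝ) < b := by exact_mod_cast (by omega : 1 < b)
  have hb0 : (0:ℝ) < b := by linarith
  set ξ := ∑' j : ℕ, (x j : ℝ) / (b:ℝ) ^ (j+1) with hξ
  set R : ℕ → ℝ := fun k => ∑' t : ℕ, (x (k+t) : ℝ) / (b:ℝ) ^ (t+1) with hRdef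
  have hRsum : ∀ k, Summable (fun t : ℕ => (x (k+t) : ℝ) / (b:ℝ) ^ (t+1)) :=
    fun k => digit_summable b hb _ (fun t => hd _)
  have hR0 : ∀ k, 0 ≤ R k := fun k => tsum_nonneg (fun t => by positivity)
  have hR1 : ∀ k, R k ≤ 1 := fun k => digit_tsum_le_one b hb _ (fun t => hd _)
  -- splitting at position k
  have hsplitk : ∀ k : ℕ, (b:ℝ)^k * ξ =
      (∑ j ∈ Finset.range k, (x j : ℝ) * (b:ℝ)^(k-1-j)) + R k := by
    intro k
    have h0 := Summable.sum_add_tsum_nat_add k (digit_summable b hb x hd)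
    have htail : (∑' t : ℕ, (x (t+k) : ℝ) / (b:ℝ)^((t+k)+1)) = ((b:ℝ)^k)⁻¹ * R k := by
      rw [hRdef, ← tsum_mul_left]
      apply tsum_congr
      intro t
      rw [add_comm t k, show k + t + 1 = (t+1) + k by ring, pow_add]
      field_simp
      try ring
      try tauto
    rw [hξ, ← h0, htail, mul_add, Finset.mul_sum]
    congr 1
    · apply Finset.sum_congr rfl
      intro j hj
      have hjk : j < k := Finset.mem_range.mp hj
      rw [show k = (j+1) + (k-1-j) by omega, pow_add]
      field_simp
      rw [show j + 1 + (k - 1 - j) - 1 - j = k - 1 - j by omega]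
      ring
    · rw [← mul_assoc, mul_inv_cancel₀ (by positivity), one_mul]
  -- integer part
  set Nz : ℕ → ℤ := fun k => ∑ j ∈ Finset.range k, (x j : ℤ) * (b:ℤ)^(k-1-j) with hNz
  have hNzR : ∀ k : ℕ, ((Nz k : ℤ) : ℝ) = ∑ j ∈ Finset.range k, (x j : ℝ) * (b:ℝ)^(k-1-j) := by
    intro k; push_cast [hNz]; rfl
  have hk : ∀ k, (b:ℝ)^k * ξ = (Nz k : ℝ) + R k := by
    intro k; rw [hNzR]; exact hsplitk k
  -- q and P
  have hpowlt : b ^ i < b ^ m := Nat.pow_lt_pow_right (by omega) him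
  have hq0 : 0 < b ^ m - b ^ i := by omega
  set q : ℕ := b ^ m - b ^ i with hq
  have hqR : (q : ℝ) = (b:ℝ)^m - (b:ℝ)^i := by
    rw [hq]; push_cast [Nat.cast_sub hpowlt.le]; ring
  refine ⟨hq0, Nz m - Nz i, ?_⟩
  have hqξ : (q:ℝ) * ξ - ((Nz m - Nz i : ℤ) : ℝ) = R m - R i := by
    rw [hqR]; push_cast; rw [sub_mul, hk m, hk i]; ring
  -- second splitting at n
  have hsplit2 : ∀ k : ℕ, R k =
      (∑ t ∈ Finset.range n, (x (k+t) : ℝ)/(b:ℝ)^(t+1)) + ((b:ℝ)^n)⁻¹ * R (k+n) := by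
    intro k
    have h0 := Summable.sum_add_tsum_nat_add n (hRsum k)
    rw [hRdef]
    simp only []
    rw [← h0]
    congr 1
    rw [← tsum_mul_left]
    apply tsum_congr
    intro t
    rw [show k + (t + n) = (k+n) + t by ring, show (t + n) + 1 = (t+1) + n by ring, pow_add]
    field_simp
    try ring
    try tauto
  have hSeq : (∑ t ∈ Finset.range n, (x (m+t) : ℝ)/(b:ℝ)^(t+1)) =
      (∑ t ∈ Finset.range n, (x (i+t) : ℝ)/(b:ℝ)^(t+1)) := by
    apply Finset.sum_congr rfl
    intro t ht
    rw [hsub t (Finset.mem_range.mp ht)]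
  have habs : |R m - R i| ≤ ((b:ℝ)^n)⁻¹ := by
    rw [hsplit2 m, hsplit2 i, hSeq]
    have heq : (∑ t ∈ Finset.range n, (x (i+t) : ℝ)/(b:ℝ)^(t+1)) + ((b:ℝ)^n)⁻¹ * R (m+n)
        - ((∑ t ∈ Finset.range n, (x (i+t) : ℝ)/(b:ℝ)^(t+1)) + ((b:ℝ)^n)⁻¹ * R (i+n))
        = ((b:ℝ)^n)⁻¹ * (R (m+n) - R (i+n)) := by ring
    rw [heq, abs_mul, abs_of_pos (by positivity : (0:ℝ) < ((b:ℝ)^n)⁻¹)]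
    have : |R (m+n) - R (i+n)| ≤ 1 := by
      rw [abs_le]
      constructor <;> [linarith [hR0 (m+n), hR1 (i+n)]; linarith [hR1 (m+n), hR0 (i+n)]]
    calc ((b:ℝ)^n)⁻¹ * |R (m+n) - R (i+n)| ≤ ((b:ℝ)^n)⁻¹ * 1 := by gcongr
      _ = ((b:ℝ)^n)⁻¹ := mul_one _
  -- final estimate
  have hq0R : (0:ℝ) < q := by exact_mod_cast hq0
  have hdiff : ξ - ((Nz m - Nz i : ℤ) : ℝ) / q = ((q:ℝ) * ξ - ((Nz m - Nz i : ℤ) : ℝ)) / q := by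
    rw [eq_div_iff hq0R.ne']
    rw [sub_mul, div_mul_cancel₀ _ hq0R.ne']
    ring
  have hbound : |ξ - ((Nz m - Nz i : ℤ) : ℝ) / q| ≤ ((b:ℝ)^n)⁻¹ / q := by
    rw [hdiff, abs_div, abs_of_pos hq0R, hqξ]
    exact (div_le_div_iff_of_pos_right hq0R).mpr habs
  -- q^μ < b^n * q
  have hq1R : (1:ℝ) ≤ q := by exact_mod_cast hq0
  have hqltR : (q:ℝ) < (b:ℝ)^m := by
    rw [hqR]
    have : (0:ℝ) < (b:ℝ)^i := by positivity
    linarith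
  have h1 : (q:ℝ)^(μ-1) < ((b:ℝ)^m)^(μ-1) :=
    Real.rpow_lt_rpow (by positivity) hqltR (by linarith)
  have h2 : ((b:ℝ)^m)^(μ-1) = (b:ℝ)^((m:ℝ)*(μ-1)) := by
    rw [← Real.rpow_natCast (b:ℝ) m, ← Real.rpow_mul hb0.le]
  have h3 : (b:ℝ)^((m:ℝ)*(μ-1)) ≤ (b:ℝ)^((n:ℕ):ℝ) := by
    apply Real.rpow_le_rpow_of_exponent_le hb1.le
    nlinarith [hmn]
  have h4 : (b:ℝ)^((n:ℕ):ℝ) = (b:ℝ)^n := Real.rpow_natCast _ _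
  have h5 : (q:ℝ)^μ = (q:ℝ)^(μ-1) * q := by
    nth_rewrite 1 [show μ = (μ-1)+1 by ring]
    rw [Real.rpow_add hq0R, Real.rpow_one]
  have h6 : (q:ℝ)^μ < (b:ℝ)^n * q := by
    rw [h5]
    have := h1.trans_le (h2 ▸ (h3.trans_eq h4))
    exact mul_lt_mul_of_pos_right this hq0R
  have h7 : ((b:ℝ)^n)⁻¹ / q < 1 / (q:ℝ)^μ := by
    rw [div_lt_div_iff₀ hq0R (by positivity)]
    calc ((b:ℝ)^n)⁻¹ * (q:ℝ)^μ < ((b:ℝ)^n)⁻¹ * ((b:ℝ)^n * q) :=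
          mul_lt_mul_of_pos_left h6 (by positivity)
      _ = 1 * (q:ℝ) := by
          rw [← mul_assoc, inv_mul_cancel₀ (by positivity), one_mul]
  exact hbound.trans_lt h7

lemma one_le_exponent (ξ : ℝ) : 1 ≤ irrationalityExponent ξ := by
  have hinf : {q : ℕ | 0 < q ∧ ∃ p : ℤ, |ξ - p / q| < 1 / (q:ℝ) ^ (1:ℝ)}.Infinite := by
    apply Set.Infinite.mono (t := {q : ℕ | 0 < q ∧ ∃ p : ℤ, |ξ - p / q| < 1 / (q:ℝ) ^ (1:ℝ)})
      ?_ (Set.Ioi_infinite 0)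
    intro q hq
    have hq0 : 0 < q := hq
    have hq0R : (0:ℝ) < q := by exact_mod_cast hq0
    refine ⟨hq0, round ((q:ℝ) * ξ), ?_⟩
    have h1 : |(q:ℝ)*ξ - round ((q:ℝ)*ξ)| ≤ 1/2 := abs_sub_round _
    have h2 : ξ - (round ((q:ℝ)*ξ) : ℝ)/q = ((q:ℝ)*ξ - round ((q:ℝ)*ξ))/q := by
      rw [eq_div_iff hq0R.ne', sub_mul, div_mul_cancel₀ _ hq0R.ne']
      ring
    rw [h2, abs_div, abs_of_pos hq0R, Real.rpow_one]
    calc |(q:ℝ)*ξ - round ((q:ℝ)*ξ)| / q ≤ (1/2) / q := by gcongr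
      _ < 1 / q := (div_lt_div_iff_of_pos_right hq0R).mpr (by norm_num)
  calc (1:ENNReal) = ENNReal.ofReal 1 := by simp
    _ ≤ irrationalityExponent ξ := by
        unfold irrationalityExponent
        refine le_iSup_of_le 1 ?_
        rw [iSup_pos hinf]

lemma exp_ge (b : ℕ) (hb : 2 ≤ b) (x : ℕ → ℕ) (hd : ∀ j, x j < b)
    (hx : ¬ UltimatelyPeriodic x) (μ : ℝ) (hμ : 1 < μ)
    (hfreq : ∃ᶠ n in atTop,
      ((repFn x n : ENNReal) / (n : ENNReal)) < (ENNReal.ofReal (μ - 1))⁻¹) :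
    ENNReal.ofReal μ ≤ irrationalityExponent (∑' j : ℕ, (x j : ℝ) / (b:ℝ) ^ (j+1)) := by
  set ξ := ∑' j : ℕ, (x j : ℝ) / (b:ℝ) ^ (j+1) with hξ
  have hS : {q : ℕ | 0 < q ∧ ∃ p : ℤ, |ξ - p / q| < 1 / (q:ℝ) ^ μ}.Infinite := by
    by_contra hfin
    rw [Set.not_infinite] at hfin
    obtain ⟨Q, hQ⟩ := hfin.bddAbove
    obtain ⟨N0, hN0⟩ := (finite_repFn_le b x hd hx Q).bddAbove
    obtain ⟨n, hnN, hlt⟩ := (Filter.frequently_atTop.mp hfreq) (N0+1)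
    obtain ⟨hpos, i, him, hsub⟩ := repFn_spec b x hd n
    have hmQ : Q < repFn x n := by
      by_contra hle
      push_neg at hle
      have : n ≤ N0 := hN0 (show n ∈ {n : ℕ | repFn x n ≤ Q} from hle)
      omega
    -- convert the ENNReal inequality to a real one
    have hd0 : ENNReal.ofReal (μ-1) ≠ 0 := by
      simp only [ne_eq, ENNReal.ofReal_eq_zero, not_le]
      linarith
    have hdt : ENNReal.ofReal (μ-1) ≠ ⊤ := ENNReal.ofReal_ne_top
    have hn0 : ((n:ℕ) : ENNReal) ≠ 0 := by
      simp only [ne_eq, Nat.cast_eq_zero]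
      omega
    have hnt : ((n:ℕ) : ENNReal) ≠ ⊤ := ENNReal.natCast_ne_top n
    have hstep1 : ((repFn x n : ℕ) : ENNReal) < (ENNReal.ofReal (μ-1))⁻¹ * n :=
      (ENNReal.div_lt_iff (Or.inl hn0) (Or.inl hnt)).mp hlt
    have hstep2 : ENNReal.ofReal (μ-1) * (repFn x n : ℕ) < ((n:ℕ) : ENNReal) := by
      have := (ENNReal.mul_lt_mul_iff_right hd0 hdt).mpr hstep1
      rwa [← mul_assoc, ENNReal.mul_inv_cancel hd0 hdt, one_mul] at this
    have hreal : (μ - 1) * ((repFn x n : ℕ):ℝ) < (n:ℝ) := by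
      have hcast : ∀ k : ℕ, ((k:ℕ) : ENNReal) = ENNReal.ofReal (k:ℝ) := by
        intro k; rw [ENNReal.ofReal_natCast]
      rw [hcast (repFn x n), hcast n, ← ENNReal.ofReal_mul (by linarith)] at hstep2
      exact (ENNReal.ofReal_lt_ofReal_iff_of_nonneg
        (mul_nonneg (by linarith) (Nat.cast_nonneg _))).mp hstep2
    obtain ⟨hq0, p, hp⟩ := key_approx b hb x hd n (repFn x n) i him hsub μ hμ hreal
    have hmem : (b ^ (repFn x n) - b ^ i) ∈ {q : ℕ | 0 < q ∧ ∃ p : ℤ, |ξ - p / q| < 1 / (q:ℝ) ^ μ} :=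
      ⟨hq0, p, hp⟩
    have hle' : b ^ (repFn x n) - b ^ i ≤ Q := hQ hmem
    have hge := le_pow_sub b (repFn x n) i hb him
    omega
  calc ENNReal.ofReal μ = ⨆ (_ : {q : ℕ | 0 < q ∧ ∃ p : ℤ, |ξ - p / q| < 1 / (q:ℝ) ^ μ}.Infinite),
        ENNReal.ofReal μ := (iSup_pos (f := fun _ => ENNReal.ofReal μ) hS).symm
    _ ≤ irrationalityExponent ξ := by
        unfold irrationalityExponent
        exact le_iSup_of_le μ le_rfl

end ProofAux

theorem exponent_ge_one_add_inv_rep (b : ℕ) (hb : 2 ≤ b) (x : ℕ → ℕ)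
    (hd : ∀ j, x j < b) (hx : ¬ UltimatelyPeriodic x) :
    1 + 1 / Filter.liminf (fun n : ℕ => (repFn x n : ENNReal) / (n : ENNReal)) Filter.atTop ≤
      irrationalityExponent (∑' j : ℕ, (x j : ℝ) / (b : ℝ) ^ (j + 1)) := by
  set L := Filter.liminf (fun n : ℕ => (repFn x n : ENNReal) / (n : ENNReal)) Filter.atTop with hL
  set E := irrationalityExponent (∑' j : ℕ, (x j : ℝ) / (b : ℝ) ^ (j + 1)) with hE
  apply le_of_forall_lt
  intro c hc
  rcases lt_or_ge c 1 with h1 | h1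
  · exact h1.trans_le (one_le_exponent _)
  · have hct : c ≠ ⊤ := hc.ne_top
    have h1c : (1:ℝ) ≤ c.toReal := by
      have := ENNReal.toReal_mono hct h1
      simpa using this
    by_cases hL0 : L = 0
    · -- L = 0 : pick μ = c.toReal + 1
      have hμ : 1 < c.toReal + 1 := by linarith
      have hlt' : L < (ENNReal.ofReal (c.toReal + 1 - 1))⁻¹ := by
        rw [hL0]
        exact ENNReal.inv_pos.mpr ENNReal.ofReal_ne_top
      have hfreq : ∃ᶠ n in atTop,
          ((repFn x n : ENNReal) / (n : ENNReal)) < (ENNReal.ofReal (c.toReal + 1 - 1))⁻¹ :=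
        frequently_lt_of_liminf_lt (by isBoundedDefault) (by rw [← hL]; exact hlt')
      have h := exp_ge b hb x hd hx _ hμ hfreq
      have hEq : ENNReal.ofReal (c.toReal + 1) = c + 1 := by
        rw [ENNReal.ofReal_add ENNReal.toReal_nonneg (by norm_num), ENNReal.ofReal_toReal hct,
          ENNReal.ofReal_one]
      rw [hEq] at h
      exact lt_of_lt_of_le (ENNReal.lt_add_right hct one_ne_zero) h
    · -- 0 < L; also L ≠ ⊤
      have hLt : L ≠ ⊤ := by
        intro h
        rw [h] at hc
        simp at hc
        exact absurd hc (not_lt.mpr h1)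
      have h1L : (1:ENNReal) / L ≠ ⊤ := by
        rw [one_div]
        exact ENNReal.inv_ne_top.mpr hL0
      have hsum_ne : (1:ENNReal) + 1 / L ≠ ⊤ :=
        ENNReal.add_ne_top.mpr ⟨ENNReal.one_ne_top, h1L⟩
      have hcr : c.toReal < (1 + 1/L).toReal :=
        (ENNReal.toReal_lt_toReal hct hsum_ne).mpr hc
      obtain ⟨μ, hμ1, hμ2⟩ := exists_between hcr
      have hμ : 1 < μ := lt_of_le_of_lt h1c hμ1
      have htr : (1 + 1/L).toReal = 1 + (L⁻¹).toReal := by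
        rw [ENNReal.toReal_add (by norm_num) h1L, ENNReal.toReal_one, one_div]
      rw [htr] at hμ2
      have hμ2' : μ - 1 < (L⁻¹).toReal := by linarith
      have hofr : ENNReal.ofReal (μ - 1) < L⁻¹ := by
        have hLinvt : L⁻¹ ≠ ⊤ := ENNReal.inv_ne_top.mpr hL0
        rw [← ENNReal.ofReal_toReal hLinvt]
        exact (ENNReal.ofReal_lt_ofReal_iff_of_nonneg (by linarith)).mpr hμ2'
      have hLlt : L < (ENNReal.ofReal (μ - 1))⁻¹ := ENNReal.lt_inv_iff_lt_inv.mp hofr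
      have hfreq : ∃ᶠ n in atTop,
          ((repFn x n : ENNReal) / (n : ENNReal)) < (ENNReal.ofReal (μ - 1))⁻¹ :=
        frequently_lt_of_liminf_lt (by isBoundedDefault) (by rw [← hL]; exact hLlt)
      have h := exp_ge b hb x hd hx μ hμ hfreq
      have : c < ENNReal.ofReal μ := by
        rw [← ENNReal.ofReal_toReal hct]
        exact (ENNReal.ofReal_lt_ofReal_iff (by linarith)).mpr hμ1
      exact lt_of_lt_of_le this h
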